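/- Theorem (nonnegative case): Let 𝒜 ⊆ M(N,M) and ℬ ⊆ M(M,N) be finite sets of matrices with all entries nonnegative and with no zero rows (every row of every matrix in 𝒜 ∪ ℬ has positive sum). Suppose every sequence (A_n) ∈ 𝒜^∞ is ℬ-right-bounded. Then there exists a universal constant C > 0 such that for every sequence (A_n) ∈ 𝒜^∞ there is a sequence (B_n) ∈ ℬ^∞ with ‖A_n B_n ⋯ A_1 B_1‖ ≤ C for all n ≥ 1. -/

import Mathlib

attribute [local instance] Matrix.linftyOpNormedAddCommGroup Matrix.linftyOpNormedRing

/-- `prodAB A B n = (A n * B n) * ⋯ * (A 1 * B 1)`, with `prodAB A B 0 = 1`. -/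
def prodAB {N M : ℕ} (A : ℕ → Matrix (Fin N) (Fin M) ℝ)
    (B : ℕ → Matrix (Fin M) (Fin N) ℝ) : ℕ → Matrix (Fin N) (Fin N) ℝ
  | 0 => 1
  | n + 1 => A (n + 1) * B (n + 1) * prodAB A B n

namespace StmtAux

open Matrix Finset

/-- row sum -/
def rowSum {a b : ℕ} (X : Matrix (Fin a) (Fin b) ℝ) (i : Fin a) : ℝ := ∑ j, X i j

noncomputable def rmin {a b : ℕ} [NeZero a] (X : Matrix (Fin a) (Fin b) ℝ) : ℝ :=
  Finset.univ.inf' Finset.univ_nonempty (rowSum X)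

lemma rmin_le {a b : ℕ} [NeZero a] (X : Matrix (Fin a) (Fin b) ℝ) (i : Fin a) :
    rmin X ≤ rowSum X i := Finset.inf'_le _ (Finset.mem_univ i)

lemma le_rmin {a b : ℕ} [NeZero a] {X : Matrix (Fin a) (Fin b) ℝ} {c : ℝ}
    (h : ∀ i, c ≤ rowSum X i) : c ≤ rmin X := Finset.le_inf' _ _ fun i _ => h i

lemma rmin_nonneg {a b : ℕ} [NeZero a] {X : Matrix (Fin a) (Fin b) ℝ}
    (h : ∀ i j, 0 ≤ X i j) : 0 ≤ rmin X :=
  le_rmin fun i => Finset.sum_nonneg fun j _ => h i j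

lemma rowSum_mul {a b c : ℕ} (X : Matrix (Fin a) (Fin b) ℝ) (Y : Matrix (Fin b) (Fin c) ℝ)
    (i : Fin a) : rowSum (X * Y) i = ∑ k, X i k * rowSum Y k := by
  simp only [rowSum, Matrix.mul_apply, Finset.mul_sum]
  exact Finset.sum_comm

lemma rmin_mul {a b c : ℕ} [NeZero a] [NeZero b] {X : Matrix (Fin a) (Fin b) ℝ}
    {Y : Matrix (Fin b) (Fin c) ℝ} (hX : ∀ i j, 0 ≤ X i j) (hY : ∀ i j, 0 ≤ Y i j) :
    rmin X * rmin Y ≤ rmin (X * Y) := by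
  refine le_rmin fun i => ?_
  rw [rowSum_mul]
  calc rmin X * rmin Y ≤ rowSum X i * rmin Y :=
        mul_le_mul_of_nonneg_right (rmin_le X i) (rmin_nonneg hY)
    _ = ∑ k, X i k * rmin Y := by rw [rowSum, Finset.sum_mul]
    _ ≤ ∑ k, X i k * rowSum Y k :=
        Finset.sum_le_sum fun k _ => mul_le_mul_of_nonneg_left (rmin_le Y k) (hX i k)

lemma mul_nonneg_entries {a b c : ℕ} {X : Matrix (Fin a) (Fin b) ℝ}
    {Y : Matrix (Fin b) (Fin c) ℝ} (hX : ∀ i j, 0 ≤ X i j) (hY : ∀ i j, 0 ≤ Y i j) :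
    ∀ i j, 0 ≤ (X * Y) i j := fun i j => by
  rw [Matrix.mul_apply]
  exact Finset.sum_nonneg fun k _ => mul_nonneg (hX i k) (hY k j)

lemma rowSum_le_norm {a b : ℕ} (X : Matrix (Fin a) (Fin b) ℝ) (i : Fin a) :
    rowSum X i ≤ ‖X‖ := by
  rw [Matrix.linfty_opNorm_def]
  calc rowSum X i ≤ ∑ j, ‖X i j‖ := Finset.sum_le_sum fun j _ => le_abs_self _
    _ = ((∑ j, ‖X i j‖₊ : NNReal) : ℝ) := by push_cast; rfl
    _ ≤ _ := NNReal.coe_le_coe.mpr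
        (Finset.le_sup (f := fun i => ∑ j, ‖X i j‖₊) (Finset.mem_univ i))

lemma exists_norm_eq_rowSum {a b : ℕ} [NeZero a] {X : Matrix (Fin a) (Fin b) ℝ}
    (hX : ∀ i j, 0 ≤ X i j) : ∃ i, ‖X‖ = rowSum X i := by
  obtain ⟨i, _, hi⟩ := Finset.exists_mem_eq_sup (Finset.univ : Finset (Fin a))
    Finset.univ_nonempty (fun i => ∑ j, ‖X i j‖₊)
  refine ⟨i, ?_⟩
  rw [Matrix.linfty_opNorm_def, hi]
  push_cast
  refine Finset.sum_congr rfl fun j _ => ?_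
  simp [Real.norm_eq_abs, abs_of_nonneg (hX i j)]

lemma prodAB_congr {N M : ℕ} {A A' : ℕ → Matrix (Fin N) (Fin M) ℝ}
    {B B' : ℕ → Matrix (Fin M) (Fin N) ℝ} {n : ℕ}
    (hA : ∀ t, 1 ≤ t → t ≤ n → A t = A' t) (hB : ∀ t, 1 ≤ t → t ≤ n → B t = B' t) :
    prodAB A B n = prodAB A' B' n := by
  induction n with
  | zero => rfl
  | succ n ih =>
      simp only [prodAB]
      rw [hA (n+1) (Nat.succ_le_succ (Nat.zero_le n)) le_rfl,
        hB (n+1) (Nat.succ_le_succ (Nat.zero_le n)) le_rfl,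
        ih (fun t ht htn => hA t ht (htn.trans (Nat.le_succ n)))
          (fun t ht htn => hB t ht (htn.trans (Nat.le_succ n)))]

lemma prodAB_add {N M : ℕ} (A : ℕ → Matrix (Fin N) (Fin M) ℝ)
    (B : ℕ → Matrix (Fin M) (Fin N) ℝ) (s k : ℕ) :
    prodAB A B (s + k)
      = prodAB (fun t => A (s + t)) (fun t => B (s + t)) k * prodAB A B s := by
  induction k with
  | zero => simp [prodAB]
  | succ k ih =>
      show prodAB A B (s + k + 1) = _
      simp only [prodAB, ih, mul_assoc, Nat.add_assoc]

lemma prodAB_nonneg {N M : ℕ} {A : ℕ → Matrix (Fin N) (Fin M) ℝ}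
    {B : ℕ → Matrix (Fin M) (Fin N) ℝ} {n : ℕ}
    (hA : ∀ t, 1 ≤ t → t ≤ n → ∀ i j, 0 ≤ A t i j)
    (hB : ∀ t, 1 ≤ t → t ≤ n → ∀ i j, 0 ≤ B t i j) :
    ∀ i j, 0 ≤ prodAB A B n i j := by
  induction n with
  | zero =>
      intro i j
      show (0:ℝ) ≤ (1 : Matrix (Fin N) (Fin N) ℝ) i j
      rw [Matrix.one_apply]
      split <;> norm_num
  | succ n ih =>
      have h1 : ∀ i j, 0 ≤ A (n+1) i j :=
        hA (n+1) (Nat.succ_le_succ (Nat.zero_le n)) le_rfl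
      have h2 : ∀ i j, 0 ≤ B (n+1) i j :=
        hB (n+1) (Nat.succ_le_succ (Nat.zero_le n)) le_rfl
      have h3 := ih (fun t ht htn => hA t ht (htn.trans (Nat.le_succ n)))
        (fun t ht htn => hB t ht (htn.trans (Nat.le_succ n)))
      exact mul_nonneg_entries (mul_nonneg_entries h1 h2) h3

lemma rmin_one {N : ℕ} [NeZero N] : rmin (1 : Matrix (Fin N) (Fin N) ℝ) = 1 := by
  have : ∀ i : Fin N, rowSum (1 : Matrix (Fin N) (Fin N) ℝ) i = 1 := by
    intro i
    simp [rowSum, Matrix.one_apply]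
  refine le_antisymm ?_ (le_rmin fun i => (this i).ge)
  exact (rmin_le _ (Classical.arbitrary (Fin N))).trans (this _).le

lemma le_rmin_prodAB {N M : ℕ} [NeZero N] [NeZero M] {A : ℕ → Matrix (Fin N) (Fin M) ℝ}
    {B : ℕ → Matrix (Fin M) (Fin N) ℝ} {n : ℕ} {δ : ℝ} (hδ0 : 0 ≤ δ)
    (hA : ∀ t, 1 ≤ t → t ≤ n → ∀ i j, 0 ≤ A t i j)
    (hB : ∀ t, 1 ≤ t → t ≤ n → ∀ i j, 0 ≤ B t i j)
    (hAr : ∀ t, 1 ≤ t → t ≤ n → δ ≤ rmin (A t))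
    (hBr : ∀ t, 1 ≤ t → t ≤ n → δ ≤ rmin (B t)) :
    (δ * δ) ^ n ≤ rmin (prodAB A B n) := by
  induction n with
  | zero => simp [prodAB, rmin_one]
  | succ n ih =>
      have hs : ∀ t, 1 ≤ t → t ≤ n + 1 → True := fun _ _ _ => trivial
      have h1 : ∀ i j, 0 ≤ A (n+1) i j :=
        hA (n+1) (Nat.succ_le_succ (Nat.zero_le n)) le_rfl
      have h2 : ∀ i j, 0 ≤ B (n+1) i j :=
        hB (n+1) (Nat.succ_le_succ (Nat.zero_le n)) le_rfl
      have h3 : ∀ i j, 0 ≤ prodAB A B n i j :=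
        prodAB_nonneg (fun t ht htn => hA t ht (htn.trans (Nat.le_succ n)))
          (fun t ht htn => hB t ht (htn.trans (Nat.le_succ n)))
      have ih' := ih (fun t ht htn => hA t ht (htn.trans (Nat.le_succ n)))
        (fun t ht htn => hB t ht (htn.trans (Nat.le_succ n)))
        (fun t ht htn => hAr t ht (htn.trans (Nat.le_succ n)))
        (fun t ht htn => hBr t ht (htn.trans (Nat.le_succ n)))
      have hAB : δ * δ ≤ rmin (A (n+1) * B (n+1)) := by
        calc δ * δ ≤ rmin (A (n+1)) * rmin (B (n+1)) :=
              mul_le_mul (hAr (n+1) (Nat.succ_le_succ (Nat.zero_le n)) le_rfl)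
                (hBr (n+1) (Nat.succ_le_succ (Nat.zero_le n)) le_rfl) hδ0
                ((hδ0.trans (hAr (n+1) (Nat.succ_le_succ (Nat.zero_le n)) le_rfl)))
          _ ≤ _ := rmin_mul h1 h2
      calc (δ * δ) ^ (n + 1) = (δ * δ) * (δ * δ) ^ n := pow_succ' _ _
        _ ≤ rmin (A (n+1) * B (n+1)) * rmin (prodAB A B n) :=
              mul_le_mul hAB ih' (pow_nonneg (mul_nonneg hδ0 hδ0) n)
                ((rmin_nonneg (mul_nonneg_entries h1 h2)))
        _ ≤ rmin (A (n+1) * B (n+1) * prodAB A B n) :=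
              rmin_mul (mul_nonneg_entries h1 h2) h3
        _ = rmin (prodAB A B (n+1)) := rfl

lemma norm_mul_ge {N : ℕ} [NeZero N] {Q : Matrix (Fin N) (Fin N) ℝ}
    {P : Matrix (Fin N) (Fin N) ℝ} (hQ : ∀ i j, 0 ≤ Q i j) (hP : ∀ i j, 0 ≤ P i j) :
    ‖Q‖ * rmin P ≤ ‖Q * P‖ := by
  obtain ⟨i, hi⟩ := exists_norm_eq_rowSum hQ
  calc ‖Q‖ * rmin P = rowSum Q i * rmin P := by rw [hi]
    _ ≤ rowSum (Q * P) i := by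
        rw [rowSum_mul]
        calc rowSum Q i * rmin P = ∑ k, Q i k * rmin P := by rw [rowSum, Finset.sum_mul]
          _ ≤ ∑ k, Q i k * rowSum P k :=
              Finset.sum_le_sum fun k _ => mul_le_mul_of_nonneg_left (rmin_le P k) (hQ i k)
    _ ≤ ‖Q * P‖ := rowSum_le_norm _ i

end StmtAux

open StmtAux in
/-- Nonnegative case: if `𝒜`, `ℬ` are finite sets of matrices with
nonnegative entries and no zero rows, and every sequence with values in
`𝒜` is `ℬ`-right-bounded, then there is a universal constant `C > 0` such that
for every sequence `(A_n)` in `𝒜` there is a sequence `(B_n)` in `ℬ` with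
`‖A_n B_n ⋯ A_1 B_1‖ ≤ C` for all `n ≥ 1`. -/
theorem stmt11 {N M : ℕ} (𝒜 : Set (Matrix (Fin N) (Fin M) ℝ))
    (ℬ : Set (Matrix (Fin M) (Fin N) ℝ)) (h𝒜 : 𝒜.Finite) (hℬ : ℬ.Finite)
    (hAnn : ∀ A ∈ 𝒜, ∀ i j, 0 ≤ A i j) (hBnn : ∀ B ∈ ℬ, ∀ i j, 0 ≤ B i j)
    (hArow : ∀ A ∈ 𝒜, ∀ i, 0 < ∑ j, A i j) (hBrow : ∀ B ∈ ℬ, ∀ i, 0 < ∑ j, B i j)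
    (hbd : ∀ A : ℕ → Matrix (Fin N) (Fin M) ℝ, (∀ n, A n ∈ 𝒜) →
      ∃ B : ℕ → Matrix (Fin M) (Fin N) ℝ, (∀ n, B n ∈ ℬ) ∧
        ∃ C : ℝ, ∀ n, 1 ≤ n → ‖prodAB A B n‖ ≤ C) :
    ∃ C : ℝ, 0 < C ∧ ∀ A : ℕ → Matrix (Fin N) (Fin M) ℝ, (∀ n, A n ∈ 𝒜) →
      ∃ B : ℕ → Matrix (Fin M) (Fin N) ℝ, (∀ n, B n ∈ ℬ) ∧
        ∀ n, 1 ≤ n → ‖prodAB A B n‖ ≤ C := by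
  classical
  -- trivial case: `𝒜` empty
  by_cases hA0 : ∃ A₀, A₀ ∈ 𝒜
  swap
  · exact ⟨1, one_pos, fun A hA => absurd ⟨A 0, hA 0⟩ hA0⟩
  obtain ⟨A₀, hA₀⟩ := hA0
  obtain ⟨Bseq, hBseq, -⟩ := hbd (fun _ => A₀) (fun _ => hA₀)
  set B₀ := Bseq 0 with hB₀def
  have hB₀ : B₀ ∈ ℬ := hBseq 0
  -- trivial case : `N = 0`
  rcases Nat.eq_zero_or_pos N with hN | hN
  · subst hN
    refine ⟨1, one_pos, fun A hA => ⟨fun _ => B₀, fun _ => hB₀, fun n _ => ?_⟩⟩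
    simp [Matrix.linfty_opNorm_def, Finset.univ_eq_empty]
  rcases Nat.eq_zero_or_pos M with hM | hM
  · subst hM
    exact absurd (hArow A₀ hA₀ ⟨0, hN⟩) (by simp)
  haveI : NeZero N := ⟨hN.ne'⟩
  haveI : NeZero M := ⟨hM.ne'⟩
  -- the constant δ
  have hrminA : ∀ X ∈ 𝒜, 0 < rmin X := by
    intro X hX
    exact (Finset.lt_inf'_iff _).mpr fun i _ => hArow X hX i
  have hrminB : ∀ X ∈ ℬ, 0 < rmin X := by
    intro X hX
    exact (Finset.lt_inf'_iff _).mpr fun i _ => hBrow X hX i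
  have hFA : h𝒜.toFinset.Nonempty := ⟨A₀, h𝒜.mem_toFinset.mpr hA₀⟩
  have hFB : hℬ.toFinset.Nonempty := ⟨B₀, hℬ.mem_toFinset.mpr hB₀⟩
  set δA := h𝒜.toFinset.inf' hFA (fun X => rmin X) with hδAdef
  set δB := hℬ.toFinset.inf' hFB (fun X => rmin X) with hδBdef
  set δ : ℝ := min 1 (min δA δB) with hδdef
  have hδ0 : 0 < δ := by
    refine lt_min one_pos (lt_min ?_ ?_)
    · exact (Finset.lt_inf'_iff _).mpr fun X hX => hrminA X (h𝒜.mem_toFinset.mp hX)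
    · exact (Finset.lt_inf'_iff _).mpr fun X hX => hrminB X (hℬ.mem_toFinset.mp hX)
  have hδA : ∀ X ∈ 𝒜, δ ≤ rmin X := fun X hX =>
    le_trans (le_trans (min_le_right _ _) (min_le_left _ _))
      (Finset.inf'_le _ (h𝒜.mem_toFinset.mpr hX))
  have hδB : ∀ X ∈ ℬ, δ ≤ rmin X := fun X hX =>
    le_trans (le_trans (min_le_right _ _) (min_le_right _ _))
      (Finset.inf'_le _ (hℬ.mem_toFinset.mpr hX))
  have hlam0 : 0 < δ * δ := mul_pos hδ0 hδ0
  -- the uniform finite-horizon bound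
  have star : ∃ C : ℝ, 0 < C ∧ ∀ A : ℕ → Matrix (Fin N) (Fin M) ℝ, (∀ n, A n ∈ 𝒜) →
      ∀ n : ℕ, ∃ B : ℕ → Matrix (Fin M) (Fin N) ℝ, (∀ k, B k ∈ ℬ) ∧
        ∀ k, 1 ≤ k → k ≤ n → ‖prodAB A B k‖ ≤ C := by
    by_contra hstar
    push_neg at hstar
    have key : ∀ Cx : ℝ, ∃ A : ℕ → Matrix (Fin N) (Fin M) ℝ, ∃ n : ℕ,
        (∀ t, A t ∈ 𝒜) ∧ 1 ≤ n ∧ ∀ B : ℕ → Matrix (Fin M) (Fin N) ℝ,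
          (∀ t, B t ∈ ℬ) → ∃ k, 1 ≤ k ∧ k ≤ n ∧ Cx < ‖prodAB A B k‖ := by
      intro Cx
      obtain ⟨A, hA, n, hn⟩ := hstar (max Cx 1) (lt_of_lt_of_le one_pos (le_max_right _ _))
      obtain ⟨k₀, hk₀1, hk₀n, -⟩ := hn (fun _ => B₀) (fun _ => hB₀)
      refine ⟨A, n, hA, hk₀1.trans hk₀n, fun B hB => ?_⟩
      obtain ⟨k, hk1, hkn, hgt⟩ := hn B hB
      exact ⟨k, hk1, hkn, lt_of_le_of_lt (le_max_left _ _) hgt⟩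
    choose fA fn hfmem hfn1 hfblock using key
    -- the block-lengths recursion
    set Tf : ℕ → ℕ :=
      fun j => Nat.rec 0 (fun i Ti => Ti + fn (((i : ℝ) + 1) * ((δ * δ) ^ Ti)⁻¹)) j
      with hTfdef
    set Cf : ℕ → ℝ := fun j => ((j : ℝ) + 1) * ((δ * δ) ^ Tf j)⁻¹ with hCfdef
    have hTsucc : ∀ j, Tf (j + 1) = Tf j + fn (Cf j) := fun j => rfl
    have hTlt : ∀ j, Tf j < Tf (j + 1) := fun j => by
      rw [hTsucc j]; exact Nat.lt_add_of_pos_right (hfn1 (Cf j))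
    have hTmono : Monotone Tf := monotone_nat_of_le_succ fun j => (hTlt j).le
    have hTge : ∀ j, j ≤ Tf j := by
      intro j
      induction j with
      | zero => exact Nat.zero_le _
      | succ j ih => exact Nat.succ_le_of_lt (lt_of_le_of_lt ih (hTlt j))
    set J : ℕ → ℕ := fun t => Nat.findGreatest (fun j => Tf j < t) t with hJdef
    have hJ : ∀ j t, Tf j < t → t ≤ Tf (j + 1) → J t = j := by
      intro j t hjt htj
      have hjle : j ≤ t := le_of_lt (lt_of_le_of_lt (hTge j) hjt)
      refine le_antisymm ?_ (Nat.le_findGreatest hjle hjt)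
      by_contra hgt
      push_neg at hgt
      have hspec : Tf (J t) < t := Nat.findGreatest_spec (P := fun j => Tf j < t) hjle hjt
      have : t ≤ Tf (J t) := htj.trans (hTmono hgt)
      omega
    -- the concatenated sequence
    set Ab : ℕ → Matrix (Fin N) (Fin M) ℝ :=
      fun t => fA (Cf (J t)) (t - Tf (J t)) with hAbdef
    have hAbmem : ∀ t, Ab t ∈ 𝒜 := fun t => hfmem _ _
    obtain ⟨Bb, hBbmem, Cb, hCb⟩ := hbd Ab hAbmem
    set j := ⌈max Cb 0⌉₊ with hjdef
    have hCbj : Cb < (j : ℝ) + 1 :=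
      lt_of_le_of_lt ((le_max_left _ _).trans (Nat.le_ceil _)) (lt_add_one _)
    -- apply the block property
    set B' : ℕ → Matrix (Fin M) (Fin N) ℝ := fun t => Bb (Tf j + t) with hB'def
    obtain ⟨k, hk1, hkn, hgt⟩ := hfblock (Cf j) B' (fun t => hBbmem _)
    -- identify the shifted product with the block product
    have hAgree : ∀ t, 1 ≤ t → t ≤ k → Ab (Tf j + t) = fA (Cf j) t := by
      intro t ht1 htk
      have h1 : Tf j < Tf j + t := Nat.lt_add_of_pos_right ht1
      have h2 : Tf j + t ≤ Tf (j + 1) := by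
        rw [hTsucc j]; exact Nat.add_le_add_left (htk.trans hkn) _
      have hJt : J (Tf j + t) = j := hJ j (Tf j + t) h1 h2
      simp only [hAbdef, hJt, Nat.add_sub_cancel_left]
    have hQeq : prodAB (fun t => Ab (Tf j + t)) (fun t => Bb (Tf j + t)) k
        = prodAB (fA (Cf j)) B' k :=
      prodAB_congr hAgree (fun t _ _ => rfl)
    -- nonnegativity and row-sum lower bounds
    have hPnn : ∀ i j', 0 ≤ prodAB Ab Bb (Tf j) i j' :=
      prodAB_nonneg (fun t _ _ => hAnn _ (hAbmem t)) (fun t _ _ => hBnn _ (hBbmem t))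
    have hQnn : ∀ i j', 0 ≤ prodAB (fA (Cf j)) B' k i j' :=
      prodAB_nonneg (fun t _ _ => hAnn _ (hfmem (Cf j) t)) (fun t _ _ => hBnn _ (hBbmem _))
    have hrminP : (δ * δ) ^ Tf j ≤ rmin (prodAB Ab Bb (Tf j)) :=
      le_rmin_prodAB hδ0.le (fun t _ _ => hAnn _ (hAbmem t)) (fun t _ _ => hBnn _ (hBbmem t))
        (fun t _ _ => hδA _ (hAbmem t)) (fun t _ _ => hδB _ (hBbmem t))
    -- the contradiction
    have hsplit : prodAB Ab Bb (Tf j + k)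
        = prodAB (fA (Cf j)) B' k * prodAB Ab Bb (Tf j) := by
      rw [prodAB_add, hQeq]
    have hlampow : (0:ℝ) < (δ * δ) ^ Tf j := pow_pos hlam0 _
    have hnormge : Cf j * (δ * δ) ^ Tf j < ‖prodAB Ab Bb (Tf j + k)‖ := by
      rw [hsplit]
      calc Cf j * (δ * δ) ^ Tf j < ‖prodAB (fA (Cf j)) B' k‖ * (δ * δ) ^ Tf j :=
            mul_lt_mul_of_pos_right hgt hlampow
        _ ≤ ‖prodAB (fA (Cf j)) B' k‖ * rmin (prodAB Ab Bb (Tf j)) :=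
            mul_le_mul_of_nonneg_left hrminP (norm_nonneg _)
        _ ≤ _ := norm_mul_ge hQnn hPnn
    have hval : Cf j * (δ * δ) ^ Tf j = (j : ℝ) + 1 := by
      rw [hCfdef]
      field_simp
    have hle : ‖prodAB Ab Bb (Tf j + k)‖ ≤ Cb :=
      hCb (Tf j + k) (le_trans hk1 (Nat.le_add_left _ _))
    rw [hval] at hnormge
    linarith
  -- König's lemma: from finite-horizon bounds to an infinite sequence
  obtain ⟨C, hCpos, hstar⟩ := star
  refine ⟨C, hCpos, fun A hA => ?_⟩
  have H := hstar A hA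
  set Ext : ℕ → (ℕ → Matrix (Fin M) (Fin N) ℝ) → Prop := fun n b =>
    (∀ t, b t ∈ ℬ) ∧ ∀ m, ∃ b', (∀ t, b' t ∈ ℬ) ∧ (∀ t, t < n → b' t = b t) ∧
      ∀ t, 1 ≤ t → t ≤ m → ‖prodAB A b' t‖ ≤ C with hExtdef
  have base : Ext 0 (fun _ => B₀) := by
    refine ⟨fun _ => hB₀, fun m => ?_⟩
    obtain ⟨b', hb'mem, hb'bd⟩ := H m
    exact ⟨b', hb'mem, fun t ht => absurd ht (Nat.not_lt_zero t), hb'bd⟩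
  have step : ∀ n b, Ext n b → ∃ c, c ∈ ℬ ∧ Ext (n + 1) (Function.update b n c) := by
    intro n b hb
    obtain ⟨hbmem, hext⟩ := hb
    choose b' hb'mem hb'agree hb'bd using hext
    haveI : Finite ℬ := hℬ.to_subtype
    obtain ⟨c, hc⟩ := Finite.exists_infinite_fiber (fun m => (⟨b' m n, hb'mem m n⟩ : ℬ))
    have hcinf : {m | b' m n = (c : Matrix (Fin M) (Fin N) ℝ)}.Infinite := by
      have := Set.infinite_coe_iff.mp hc
      refine this.mono ?_
      intro m hm
      simp only [Set.mem_preimage, Set.mem_singleton_iff] at hm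
      simpa using congrArg Subtype.val hm
    refine ⟨c, c.2, fun t => ?_, fun m => ?_⟩
    · rcases eq_or_ne t n with rfl | ht
      · rw [Function.update_self]; exact c.2
      · rw [Function.update_of_ne ht]; exact hbmem t
    · obtain ⟨m', hm', hmm'⟩ := hcinf.exists_gt m
      refine ⟨b' m', hb'mem m', fun t ht => ?_, fun t ht1 htm => hb'bd m' t ht1 (htm.trans hmm'.le)⟩
      rcases eq_or_ne t n with rfl | htn
      · rw [Function.update_self]; exact hm'
      · rw [Function.update_of_ne htn]
        exact hb'agree m' t (by omega)
  -- build the branch by recursion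
  let F : ∀ n : ℕ, {b : ℕ → Matrix (Fin M) (Fin N) ℝ // Ext n b} := fun n =>
    Nat.rec ⟨fun _ => B₀, base⟩
      (fun n p => ⟨Function.update p.1 n (step n p.1 p.2).choose,
        (step n p.1 p.2).choose_spec.2⟩) n
  have hFsucc : ∀ n, (F (n + 1)).1 = Function.update (F n).1 n (step n (F n).1 (F n).2).choose :=
    fun n => rfl
  have hFagree : ∀ n t, t < n → (F n).1 t = (F (t + 1)).1 t := by
    intro n
    induction n with
    | zero => intro t ht; omega
    | succ n ih =>
        intro t ht
        rcases Nat.lt_or_ge t n with htn | htn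
        · rw [hFsucc, Function.update_of_ne (by omega)]
          exact ih t htn
        · have : t = n := by omega
          subst this
          rfl
  refine ⟨fun t => (F (t + 1)).1 t, fun t => (F (t + 1)).2.1 t, fun n hn => ?_⟩
  obtain ⟨b', hb'mem, hb'agree, hb'bd⟩ := (F (n + 1)).2.2 n
  have heq : prodAB A (fun t => (F (t + 1)).1 t) n = prodAB A b' n := by
    refine prodAB_congr (fun t _ _ => rfl) (fun t ht1 htn => ?_)
    rcases Nat.lt_or_ge t (n + 1) with h | h
    · rw [← hFagree (n + 1) t h, hb'agree t h]
    · omega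
  rw [heq]
  exact hb'bd n hn le_rfl
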